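/- arXiv:1604.05364 — 3 statements merged into one kernel-verified Lean document; each statement's English description precedes it below -/
import Mathlib

section
/- Let V be a finite type and G : SimpleGraph V a tree (connected and acyclic). For any two vertices A and B of G, the graph-theoretic distance dist_G(A,B) equals the number of edges e of G such that A and B lie in different connected components of the graph obtained from G by deleting e (i.e., such that A is not reachable from B after deleting e). -/
/-- In a tree, the graph-theoretic distance between two vertices `A` and `B`
equals the number of edges whose deletion disconnects `A` from `B`. -/
theorem dist_eq_ncard_separating_edges {V : Type*} [Fintype V]
    (G : SimpleGraph V) (hconn : G.Connected) (hacyc : G.IsAcyclic)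
    (A B : V) :
    G.dist A B =
      {e : Sym2 V | e ∈ G.edgeSet ∧
        ¬ (G.deleteEdges {e}).Reachable A B}.ncard := by
  classical
  -- take the shortest walk, a path `p`
  obtain ⟨w, hw⟩ := hconn.exists_walk_length_eq_dist A B
  set p : G.Walk A B := w.bypass with hp
  have hppath : p.IsPath := w.bypass_isPath
  have hlen : p.length = G.dist A B := by
    refine le_antisymm ?_ ?_
    · rw [← hw]; exact w.length_bypass_le
    · exact SimpleGraph.dist_le p
  -- the separating edges are exactly the edges of `p`
  have hset : {e : Sym2 V | e ∈ G.edgeSet ∧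
      ¬ (G.deleteEdges {e}).Reachable A B} = {e | e ∈ p.edges} := by
    ext e
    simp only [Set.mem_setOf_eq]
    constructor
    · rintro ⟨heG, hnr⟩
      by_contra he
      exact hnr ⟨p.toDeleteEdges {e} (by
        intro f hf
        simp only [Set.mem_singleton_iff]
        rintro rfl
        exact he hf)⟩
    · intro he
      refine ⟨p.edges_subset_edgeSet he, fun hr => ?_⟩
      obtain ⟨q⟩ := hr
      -- transfer q to G
      have hq : ∀ f ∈ q.edges, f ∈ G.edgeSet := fun f hf => by
        have := q.edges_subset_edgeSet hf
        rw [SimpleGraph.edgeSet_deleteEdges] at this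
        exact this.1
      have henot : e ∉ q.edges := fun hf => by
        have := q.edges_subset_edgeSet hf
        rw [SimpleGraph.edgeSet_deleteEdges] at this
        exact this.2 rfl
      set q' := q.transfer G hq with hq'
      have hpq : p = q'.bypass := by
        have := hacyc.path_unique ⟨p, hppath⟩ ⟨q'.bypass, q'.bypass_isPath⟩
        exact congrArg Subtype.val this
      have : e ∈ q'.edges := q'.edges_bypass_subset (hpq ▸ he)
      rw [hq', q.edges_transfer hq] at this
      exact henot this
  rw [hset, ← hlen]
  rw [Set.ncard_eq_toFinset_card']
  have : {e | e ∈ p.edges}.toFinset = p.edges.toFinset := by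
    ext f; simp
  rw [this, List.toFinset_card_of_nodup hppath.edges_nodup,
    SimpleGraph.Walk.length_edges]
end

section
/- Let V be a finite type, let 𝒯 denote the (finite) set of trees on V (simple graphs G : SimpleGraph V that are connected and acyclic), and let μ : 𝒯 → ℝ be a probability mass function (μ ≥ 0 and ∑_{T ∈ 𝒯} μ(T) = 1). Say that a tree T displays the split S | Sᶜ (for S ⊆ V with S and Sᶜ nonempty) if there exists an edge e of T such that for all vertices x, y, x and y are reachable from one another in T with e deleted if and only if (x ∈ S ↔ y ∈ S). Then for any two vertices A and B: ∑_{T ∈ 𝒯} μ(T) · dist_T(A,B) = ∑_{S ⊆ V, A ∈ S, B ∉ S} ( ∑_{T displays S | Sᶜ} μ(T) ). That is, the expected graph-theoretic distance between A and B is determined by the split probabilities P_μ(S | Sᶜ) = ∑_{T displays S | Sᶜ} μ(T). -/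
/-- A tree `T` displays the split `S | Sᶜ` if some edge of `T`, when deleted,
leaves exactly `S` and `Sᶜ` as the two connected components. -/
def SimpleGraph.DisplaysSplit {V : Type*} (T : SimpleGraph V) (S : Finset V) : Prop :=
  ∃ e ∈ T.edgeSet, ∀ x y : V,
    (T.deleteEdges {e}).Reachable x y ↔ (x ∈ S ↔ y ∈ S)

namespace USTARAux

open SimpleGraph Finset

variable {V : Type*}

/-- After deleting the edge `s(u,v)`, the endpoints of any walk are still
connected, or each is connected to one of `u`, `v`. -/
lemma reach_or {G : SimpleGraph V} {u v x y : V} (w : G.Walk x y) :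
    (G.deleteEdges {s(u, v)}).Reachable x y ∨
      ((G.deleteEdges {s(u, v)}).Reachable x u ∧ (G.deleteEdges {s(u, v)}).Reachable v y) ∨
      ((G.deleteEdges {s(u, v)}).Reachable x v ∧ (G.deleteEdges {s(u, v)}).Reachable u y) := by
  induction w with
  | nil => exact Or.inl (SimpleGraph.Reachable.refl _)
  | @cons a b c h w ih =>
    by_cases he : s(a, b) = s(u, v)
    · rw [Sym2.eq_iff] at he
      rcases he with ⟨rfl, rfl⟩ | ⟨rfl, rfl⟩
      · rcases ih with h' | ⟨h1, h2⟩ | ⟨h1, h2⟩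
        · exact Or.inr (Or.inl ⟨SimpleGraph.Reachable.refl _, h'⟩)
        · exact Or.inr (Or.inl ⟨SimpleGraph.Reachable.refl _, h2⟩)
        · exact Or.inl h2
      · rcases ih with h' | ⟨h1, h2⟩ | ⟨h1, h2⟩
        · exact Or.inr (Or.inr ⟨SimpleGraph.Reachable.refl _, h'⟩)
        · exact Or.inl h2
        · exact Or.inr (Or.inr ⟨SimpleGraph.Reachable.refl _, h2⟩)
    · have hadj : (G.deleteEdges {s(u, v)}).Adj a b := by
        rw [SimpleGraph.deleteEdges_adj]
        exact ⟨h, by simpa using he⟩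
      rcases ih with h' | ⟨h1, h2⟩ | ⟨h1, h2⟩
      · exact Or.inl (hadj.reachable.trans h')
      · exact Or.inr (Or.inl ⟨hadj.reachable.trans h1, h2⟩)
      · exact Or.inr (Or.inr ⟨hadj.reachable.trans h1, h2⟩)

lemma reach_endpoint' {G : SimpleGraph V} (hc : G.Connected) (u v x : V) :
    (G.deleteEdges {s(u, v)}).Reachable x u ∨ (G.deleteEdges {s(u, v)}).Reachable x v := by
  rcases reach_or (u := u) (v := v) (hc x u).some with h' | ⟨h1, h2⟩ | ⟨h1, h2⟩
  · exact Or.inl h'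
  · exact Or.inl h1
  · exact Or.inr h1

/-- A bridge's deletion leaves its endpoints unreachable. -/
lemma not_reach_of_acyclic {G : SimpleGraph V} (ha : G.IsAcyclic) {u v : V} (huv : G.Adj u v) :
    ¬ (G.deleteEdges {s(u, v)}).Reachable u v := by
  have := (isAcyclic_iff_forall_edge_isBridge.mp ha) (G.mem_edgeSet.mpr huv)
  rw [isBridge_iff] at this
  exact this

/-- The reachability classes after deleting a bridge are exactly "same side as `A`". -/
lemma displays_of {G : SimpleGraph V} (hc : G.Connected) {u v A : V} (huv : G.Adj u v)
    (ha : G.IsAcyclic) (hA : (G.deleteEdges {s(u, v)}).Reachable A u) (x y : V) :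
    (G.deleteEdges {s(u, v)}).Reachable x y ↔
      ((G.deleteEdges {s(u, v)}).Reachable x A ↔ (G.deleteEdges {s(u, v)}).Reachable y A) := by
  have hbr := not_reach_of_acyclic ha huv
  constructor
  · intro h
    exact ⟨fun h' => h.symm.trans h', fun h' => h.trans h'⟩
  · intro h
    by_cases hx : (G.deleteEdges {s(u, v)}).Reachable x A
    · exact hx.trans (h.mp hx).symm
    · have hy : ¬ (G.deleteEdges {s(u, v)}).Reachable y A := fun hy => hx (h.mpr hy)
      have hxv : (G.deleteEdges {s(u, v)}).Reachable x v := by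
        rcases reach_endpoint' hc u v x with h' | h'
        · exact absurd (h'.trans hA.symm) hx
        · exact h'
      have hyv : (G.deleteEdges {s(u, v)}).Reachable y v := by
        rcases reach_endpoint' hc u v y with h' | h'
        · exact absurd (h'.trans hA.symm) hy
        · exact h'
      exact hxv.trans hyv.symm

open Classical in
/-- In a tree, the number of splits separating `A` and `B` that the tree displays
equals the distance between `A` and `B`. -/
lemma card_splits_eq_dist [Fintype V] (G : SimpleGraph V) (hc : G.Connected)
    (ha : G.IsAcyclic) (A B : V) :
    ((Finset.univ : Finset (Finset V)).filter
        (fun S => (A ∈ S ∧ B ∉ S) ∧ G.DisplaysSplit S)).card = G.dist A B := by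
  classical
  obtain ⟨w, hw⟩ := (hc A B).exists_walk_length_eq_dist
  have hp : w.IsPath := w.isPath_of_length_eq_dist hw
  -- the map from edges to splits
  set f : Sym2 V → Finset V :=
    fun e => Finset.univ.filter (fun x => (G.deleteEdges {e}).Reachable x A) with hf
  -- key fact: an edge of G is on the path w iff A,B are separated by deleting it
  have hkey : ∀ e ∈ G.edgeSet, (e ∈ w.edges ↔ ¬ (G.deleteEdges {e}).Reachable A B) := by
    intro e he
    constructor
    · intro hew hr
      obtain ⟨q⟩ := hr
      have hq' : q.bypass.IsPath := q.bypass_isPath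
      have hsub : ∀ e' ∈ q.bypass.edges, e' ∈ G.edgeSet := fun e' h' => by
        have := q.bypass.edges_subset_edgeSet h'
        rw [SimpleGraph.edgeSet_deleteEdges] at this
        exact this.1
      have hqp : (q.bypass.transfer G hsub).IsPath := hq'.transfer hsub
      have := ha.path_unique ⟨w, hp⟩ ⟨q.bypass.transfer G hsub, hqp⟩
      have hew' : e ∈ (q.bypass.transfer G hsub).edges := by
        have : w = q.bypass.transfer G hsub := congrArg Subtype.val this
        rwa [this] at hew
      rw [SimpleGraph.Walk.edges_transfer] at hew'
      have : e ∈ (G.deleteEdges {e}).edgeSet :=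
        q.bypass.edges_subset_edgeSet hew'
      rw [SimpleGraph.edgeSet_deleteEdges] at this
      exact this.2 rfl
    · intro hnr
      by_contra hew
      exact hnr ⟨w.toDeleteEdges {e} (fun e' h' => by
        simp only [Set.mem_singleton_iff]
        rintro rfl
        exact hew h')⟩
  -- the filter set is the image of f on the edges of w
  have himg : (Finset.univ : Finset (Finset V)).filter
        (fun S => (A ∈ S ∧ B ∉ S) ∧ G.DisplaysSplit S) = w.edges.toFinset.image f := by
    ext S
    simp only [Finset.mem_filter, Finset.mem_univ, true_and, Finset.mem_image,
      List.mem_toFinset]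
    constructor
    · rintro ⟨⟨hAS, hBS⟩, e, he, hdisp⟩
      refine ⟨e, ?_, ?_⟩
      · rw [hkey e he]
        intro hr
        exact hBS ((hdisp A B).mp hr |>.mp hAS)
      · ext x
        simp only [hf, Finset.mem_filter, Finset.mem_univ, true_and]
        rw [hdisp x A]
        exact ⟨fun h => h.mpr hAS, fun h => ⟨fun _ => hAS, fun _ => h⟩⟩
    · rintro ⟨e, hew, rfl⟩
      have he : e ∈ G.edgeSet := w.edges_subset_edgeSet hew
      -- pick endpoints with A on the u-side
      obtain ⟨u, v, huv, hA⟩ : ∃ u v, G.Adj u v ∧ e = s(u, v) ∧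
          (G.deleteEdges {e}).Reachable A u := by
        induction e with
        | h u v =>
          have hadj : G.Adj u v := G.mem_edgeSet.mp he
          rcases reach_endpoint' hc u v A with h' | h'
          · exact ⟨u, v, hadj, rfl, h'⟩
          · exact ⟨v, u, hadj.symm, Sym2.eq_swap, h'⟩
      obtain ⟨heq, hA⟩ := hA
      subst heq
      have hAB : ¬ (G.deleteEdges {s(u, v)}).Reachable A B := (hkey _ he).mp hew
      have hAf : A ∈ f s(u, v) := by
        simp only [hf, Finset.mem_filter, Finset.mem_univ, true_and]
        exact SimpleGraph.Reachable.refl A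
      have hBf : B ∉ f s(u, v) := by
        simp only [hf, Finset.mem_filter, Finset.mem_univ, true_and]
        exact fun h => hAB h.symm
      refine ⟨⟨hAf, hBf⟩, s(u, v), he, fun x y => ?_⟩
      rw [displays_of hc huv ha hA x y]
      simp [hf]
  rw [himg]
  -- injectivity of f on edges of G
  have hinj : Set.InjOn f ↑w.edges.toFinset := by
    intro e1 he1 e2 he2 hfe
    simp only [Finset.coe_insert, Set.mem_insert_iff, List.coe_toFinset, Set.mem_setOf_eq] at he1 he2
    by_contra hne
    have he1' : e1 ∈ G.edgeSet := w.edges_subset_edgeSet he1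
    have he2' : e2 ∈ G.edgeSet := w.edges_subset_edgeSet he2
    induction e2 with
    | h u v =>
      have huv : G.Adj u v := he2'
      -- u, v lie in the same class of f e1, but different classes of f e2
      have hsame : ((G.deleteEdges {e1}).Reachable u A ↔ (G.deleteEdges {e1}).Reachable v A) := by
        have hadj : (G.deleteEdges {e1}).Adj u v := by
          rw [SimpleGraph.deleteEdges_adj]
          exact ⟨huv, by simpa using fun h => hne (h.symm)⟩
        exact ⟨fun h => hadj.symm.reachable.trans h, fun h => hadj.reachable.trans h⟩
      have hdiff : ¬ ((G.deleteEdges {s(u, v)}).Reachable u A ↔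
          (G.deleteEdges {s(u, v)}).Reachable v A) := by
        intro hiff
        have hbr := not_reach_of_acyclic ha huv
        rcases reach_endpoint' hc u v A with h' | h'
        · exact hbr (h'.symm.trans (hiff.mp h'.symm).symm)
        · exact hbr ((hiff.mpr h'.symm).trans h')
      apply hdiff
      have h1 : u ∈ f e1 ↔ v ∈ f e1 := by
        simp only [hf, Finset.mem_filter, Finset.mem_univ, true_and]
        exact hsame
      rw [hfe] at h1
      simpa only [hf, Finset.mem_filter, Finset.mem_univ, true_and] using h1
  rw [Finset.card_image_of_injOn hinj, List.toFinset_card_of_nodup hp.edges_nodup,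
    SimpleGraph.Walk.length_edges, hw]

end USTARAux

open Classical in
/-- The expected graph-theoretic distance between `A` and `B` under a
distribution `μ` on trees equals the sum, over splits `S | Sᶜ` separating `A`
from `B`, of the probability that a tree displays that split.  Hence the
split probabilities determine the expected USTAR distance matrix. -/
theorem expected_dist_eq_sum_split_probabilities {V : Type*} [Fintype V]
    [Fintype {G : SimpleGraph V // G.Connected ∧ G.IsAcyclic}]
    (μ : {G : SimpleGraph V // G.Connected ∧ G.IsAcyclic} → ℝ)
    (hμ : ∀ T, 0 ≤ μ T) (hsum : ∑ T, μ T = 1) (A B : V) :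
    ∑ T, μ T * ((T : SimpleGraph V).dist A B : ℝ) =
      ∑ S ∈ Finset.univ.filter (fun S : Finset V => A ∈ S ∧ B ∉ S),
        ∑ T ∈ Finset.univ.filter
            (fun T : {G : SimpleGraph V // G.Connected ∧ G.IsAcyclic} =>
              (T : SimpleGraph V).DisplaysSplit S),
          μ T := by
  classical
  rw [Finset.sum_comm' (s := Finset.univ.filter (fun S : Finset V => A ∈ S ∧ B ∉ S))
    (t := fun S => Finset.univ.filter
      (fun T : {G : SimpleGraph V // G.Connected ∧ G.IsAcyclic} =>
        (T : SimpleGraph V).DisplaysSplit S))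
    (t' := Finset.univ)
    (s' := fun T => Finset.univ.filter
      (fun S : Finset V => (A ∈ S ∧ B ∉ S) ∧ (T : SimpleGraph V).DisplaysSplit S))
    (h := by
      intro S T
      simp only [Finset.mem_filter, Finset.mem_univ, true_and]
      tauto)]
  refine Finset.sum_congr rfl fun T _ => ?_
  rw [Finset.sum_const, nsmul_eq_mul, mul_comm]
  congr 1
  rw [USTARAux.card_splits_eq_dist (T : SimpleGraph V) T.2.1 T.2.2 A B]
end

section
/- Let X be a type, D, D' : X → X → ℝ symmetric functions with D(x,x) = 0 and D'(x,x) = 0 for all x, let c : ℝ and f : X → ℝ, and suppose D'(x,y) = D(x,y) + c − f(x) − f(y) whenever x ≠ y. Assume (i) D satisfies the four-point condition: for all pairwise distinct a, b, u, v ∈ X there is a relabeling of {a,b,u,v} such that D(a,u)+D(b,v) = D(a,v)+D(b,u) ≥ D(a,b)+D(u,v); and (ii) D' satisfies the triangle inequality: D'(a,u) + D'(b,u) ≥ D'(a,b) for all a, b, u ∈ X. Then D' satisfies the four-point condition for every 4-tuple of points of X, including tuples with repeated entries: for all a, b, u, v ∈ X there is a relabeling such that D'(a,u)+D'(b,v)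 = D'(a,v)+D'(b,u) ≥ D'(a,b)+D'(u,v), and when a, b, u, v are pairwise distinct the relabeling can be taken to be the same one that works for D. -/
/-- The four-point relation for `D` relative to the quartet pairing `ab | uv`:
the two sums crossing the pairing are equal and dominate the sum within the
pairing. -/
def FourPt {X : Type*} (D : X → X → ℝ) (a b u v : X) : Prop :=
  D a u + D b v = D a v + D b u ∧ D a v + D b u ≥ D a b + D u v

private lemma fourpt_deg1 {X : Type*} (D' : X → X → ℝ)
    (hD'symm : ∀ x y : X, D' x y = D' y x) (hD'diag : ∀ x : X, D' x x = 0)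
    (htri : ∀ a b u : X, D' a u + D' b u ≥ D' a b) (a u v : X) :
    FourPt D' a a u v := by
  constructor
  · ring
  · have := htri u v a
    rw [hD'diag a, hD'symm u a, hD'symm v a] at *
    linarith

private lemma fourpt_deg2 {X : Type*} (D' : X → X → ℝ)
    (hD'symm : ∀ x y : X, D' x y = D' y x) (hD'diag : ∀ x : X, D' x x = 0)
    (htri : ∀ a b u : X, D' a u + D' b u ≥ D' a b) (a b u : X) :
    FourPt D' a b u u := by
  constructor
  · ring
  · have := htri a b u
    rw [hD'diag u] at *
    linarith

private lemma fourpt_transfer {X : Type*} (D D' : X → X → ℝ)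
    (c : ℝ) (f : X → ℝ)
    (hD' : ∀ x y : X, x ≠ y → D' x y = D x y + c - f x - f y)
    {a b u v : X} (hab : a ≠ b) (hau : a ≠ u) (hav : a ≠ v)
    (hbu : b ≠ u) (hbv : b ≠ v) (huv : u ≠ v)
    (h : FourPt D a b u v) : FourPt D' a b u v := by
  obtain ⟨h1, h2⟩ := h
  constructor
  · rw [hD' a u hau, hD' b v hbv, hD' a v hav, hD' b u hbu]; linarith
  · rw [hD' a v hav, hD' b u hbu, hD' a b hab, hD' u v huv]; linarith

/-- If `D` is a dissimilarity satisfying the four-point condition on pairwise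
distinct quadruples (for some relabeling, i.e. one of the three pairings), and
`D'` is a dissimilarity differing from `D` off the diagonal by
`c - f x - f y` and satisfying the triangle inequality, then `D'` satisfies
the four-point condition for every 4-tuple (repeats allowed), and on pairwise
distinct quadruples any pairing that works for `D` also works for `D'`. -/
theorem four_point_condition_all_tuples {X : Type*}
    (D D' : X → X → ℝ)
    (hDsymm : ∀ x y : X, D x y = D y x) (hDdiag : ∀ x : X, D x x = 0)
    (hD'symm : ∀ x y : X, D' x y = D' y x) (hD'diag : ∀ x : X, D' x x = 0)
    (c : ℝ) (f : X → ℝ)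
    (hD' : ∀ x y : X, x ≠ y → D' x y = D x y + c - f x - f y)
    (hfour : ∀ a b u v : X, a ≠ b → a ≠ u → a ≠ v → b ≠ u → b ≠ v → u ≠ v →
      FourPt D a b u v ∨ FourPt D a u b v ∨ FourPt D a v b u)
    (htri : ∀ a b u : X, D' a u + D' b u ≥ D' a b) :
    (∀ a b u v : X,
      FourPt D' a b u v ∨ FourPt D' a u b v ∨ FourPt D' a v b u) ∧
    (∀ a b u v : X, a ≠ b → a ≠ u → a ≠ v → b ≠ u → b ≠ v → u ≠ v →
      ((FourPt D a b u v → FourPt D' a b u v) ∧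
       (FourPt D a u b v → FourPt D' a u b v) ∧
       (FourPt D a v b u → FourPt D' a v b u))) := by
  constructor
  · intro a b u v
    by_cases hab : a = b
    · subst hab; exact Or.inl (fourpt_deg1 D' hD'symm hD'diag htri a u v)
    by_cases huv : u = v
    · subst huv; exact Or.inl (fourpt_deg2 D' hD'symm hD'diag htri a b u)
    by_cases hau : a = u
    · subst hau; exact Or.inr (Or.inl (fourpt_deg1 D' hD'symm hD'diag htri a b v))
    by_cases hbv : b = v
    · subst hbv; exact Or.inr (Or.inl (fourpt_deg2 D' hD'symm hD'diag htri a u b))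
    by_cases hav : a = v
    · subst hav; exact Or.inr (Or.inr (fourpt_deg1 D' hD'symm hD'diag htri a b u))
    by_cases hbu : b = u
    · subst hbu; exact Or.inr (Or.inr (fourpt_deg2 D' hD'symm hD'diag htri a v b))
    rcases hfour a b u v hab hau hav hbu hbv huv with h | h | h
    · exact Or.inl (fourpt_transfer D D' c f hD' hab hau hav hbu hbv huv h)
    · exact Or.inr (Or.inl (fourpt_transfer D D' c f hD' hau hab hav
        (fun h => hbu h.symm) huv hbv h))
    · exact Or.inr (Or.inr (fourpt_transfer D D' c f hD' hav hab hau
        (fun h => hbv h.symm) (fun h => huv h.symm) hbu h))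
  · intro a b u v hab hau hav hbu hbv huv
    exact ⟨fourpt_transfer D D' c f hD' hab hau hav hbu hbv huv,
      fourpt_transfer D D' c f hD' hau hab hav (fun h => hbu h.symm) huv hbv,
      fourpt_transfer D D' c f hD' hav hab hau (fun h => hbv h.symm)
        (fun h => huv h.symm) hbu⟩
end
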